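/- Under the assumptions of the Riccati downdate propagation, C' := C - VᵀB G† BᵀV is positive semidefinite and range(V'ᵀ) ⊆ range(C') where V' := (Aᵀ - H G† Bᵀ)V. -/

import Mathlib

open Matrix

section helpers

lemma quad_coeff_zero {c d : ℝ} (h : ∀ t : ℝ, 0 ≤ t^2 * d + 2 * t * c) : c = 0 := by
  have hd : 0 ≤ d := by nlinarith [h 1, h (-1)]
  have hpos : (0:ℝ) < d + 1 := by linarith
  set e := c / (d + 1) with he
  have hc : c = e * (d + 1) := by rw [he, div_mul_cancel₀]; positivity
  have ht := h (-e)
  rw [hc] at ht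
  have h1 : e^2 ≤ 0 := by nlinarith
  have h2 : e^2 = 0 := le_antisymm h1 (sq_nonneg e)
  have h3 : e = 0 := by nlinarith
  rw [hc, h3, zero_mul]

lemma dot_shift {a b : Type*} [Fintype a] [Fintype b] (M : Matrix a b ℝ) (v : a → ℝ) (w : b → ℝ) :
    v ⬝ᵥ (M *ᵥ w) = (Mᵀ *ᵥ v) ⬝ᵥ w := by
  rw [dotProduct_mulVec]
  congr 1
  rw [← Matrix.transpose_transpose M, vecMul_transpose, Matrix.transpose_transpose]

lemma factor_right {a b : Type*} [Fintype a] [Fintype b] [DecidableEq a] [DecidableEq b]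
    (S : Matrix b b ℝ) (T : Matrix a b ℝ) (h : ∀ v, S *ᵥ v = 0 → T *ᵥ v = 0) :
    ∃ X : Matrix a b ℝ, T = X * S := by
  set f := Matrix.toLin' S with hf
  set g := Matrix.toLin' T with hg
  have hker : LinearMap.ker f ≤ LinearMap.ker g := by
    intro v hv
    simp only [LinearMap.mem_ker] at hv ⊢
    exact h v hv
  set gbar := (LinearMap.ker f).liftQ g hker with hgbar
  set h₁ := gbar.comp (f.quotKerEquivRange.symm : LinearMap.range f →ₗ[ℝ] _) with hh₁
  obtain ⟨h₂, hh₂⟩ := h₁.exists_extend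
  refine ⟨LinearMap.toMatrix' h₂, ?_⟩
  have hcomp : g = h₂.comp f := by
    apply LinearMap.ext
    intro v
    have hmem : f v ∈ LinearMap.range f := LinearMap.mem_range_self f v
    have e1 : h₂ (f v) = h₁ ⟨f v, hmem⟩ := by
      have := congrFun (congrArg DFunLike.coe hh₂) (⟨f v, hmem⟩ : LinearMap.range f)
      simpa using this
    rw [LinearMap.comp_apply, e1, hh₁, LinearMap.comp_apply,
      LinearEquiv.coe_coe, f.quotKerEquivRange_symm_apply_image v hmem]
    simp [hgbar, Submodule.liftQ_apply, Submodule.mkQ_apply]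
  have : LinearMap.toMatrix' g = LinearMap.toMatrix' h₂ * S := by
    rw [hcomp, LinearMap.toMatrix'_comp]
    congr 1
    rw [hf, LinearMap.toMatrix'_toLin']
  rwa [hg, LinearMap.toMatrix'_toLin'] at this

end helpers

/-- The four Moore–Penrose conditions: `Dp` is the Moore–Penrose pseudoinverse of `D`. -/
def IsMP {α : Type*} [Fintype α] [DecidableEq α] (D Dp : Matrix α α ℝ) : Prop :=
  D * Dp * D = D ∧ Dp * D * Dp = Dp ∧ (D * Dp)ᵀ = D * Dp ∧ (Dp * D)ᵀ = Dp * D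

section mp

lemma mp_unique {α : Type*} [Fintype α] [DecidableEq α] (D E F : Matrix α α ℝ)
    (hE : IsMP D E) (hF : IsMP D F) : E = F := by
  obtain ⟨hE1, hE2, hE3, hE4⟩ := hE
  obtain ⟨hF1, hF2, hF3, hF4⟩ := hF
  have h1 : D * E = D * F := by
    calc D * E = (D * E)ᵀ := hE3.symm
    _ = Eᵀ * Dᵀ := by rw [Matrix.transpose_mul]
    _ = Eᵀ * (D * F * D)ᵀ := by rw [hF1]
    _ = Eᵀ * (Dᵀ * (D * F)ᵀ) := by rw [Matrix.transpose_mul (D * F) D]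
    _ = (Eᵀ * Dᵀ) * (D * F) := by rw [hF3, Matrix.mul_assoc]
    _ = (D * E)ᵀ * (D * F) := by rw [Matrix.transpose_mul]
    _ = (D * E) * (D * F) := by rw [hE3]
    _ = (D * E * D) * F := by simp only [Matrix.mul_assoc]
    _ = D * F := by rw [hE1]
  have h2 : E * D = F * D := by
    calc E * D = (E * D)ᵀ := hE4.symm
    _ = Dᵀ * Eᵀ := by rw [Matrix.transpose_mul]
    _ = (D * F * D)ᵀ * Eᵀ := by rw [hF1]
    _ = ((F * D)ᵀ * Dᵀ) * Eᵀ := by rw [show D * F * D = D * (F * D) by rw [Matrix.mul_assoc],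
          Matrix.transpose_mul D (F * D)]
    _ = (F * D) * (Dᵀ * Eᵀ) := by rw [hF4, Matrix.mul_assoc]
    _ = (F * D) * (E * D)ᵀ := by rw [Matrix.transpose_mul]
    _ = (F * D) * (E * D) := by rw [hE4]
    _ = F * (D * E * D) := by simp only [Matrix.mul_assoc]
    _ = F * D := by rw [hE1]
  calc E = E * D * E := hE2.symm
  _ = F * D * E := by rw [h2]
  _ = F * (D * E) := by rw [Matrix.mul_assoc]
  _ = F * (D * F) := by rw [h1]
  _ = F * D * F := by rw [Matrix.mul_assoc]
  _ = F := hF2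

lemma mp_transpose {α : Type*} [Fintype α] [DecidableEq α] (D Dp : Matrix α α ℝ)
    (hD : Dᵀ = D) (h : IsMP D Dp) : Dpᵀ = Dp := by
  obtain ⟨h1, h2, h3, h4⟩ := h
  refine mp_unique D Dpᵀ Dp ⟨?_, ?_, ?_, ?_⟩ ⟨h1, h2, h3, h4⟩
  · calc D * Dpᵀ * D = (Dᵀ * Dp * Dᵀ)ᵀ := by
          simp [Matrix.transpose_mul, Matrix.mul_assoc]
    _ = (D * Dp * D)ᵀ := by rw [hD]
    _ = Dᵀ := by rw [h1]
    _ = D := hD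
  · calc Dpᵀ * D * Dpᵀ = (Dp * Dᵀ * Dp)ᵀ := by
          simp [Matrix.transpose_mul, Matrix.mul_assoc]
    _ = (Dp * D * Dp)ᵀ := by rw [hD]
    _ = Dpᵀ := by rw [h2]
  · calc (D * Dpᵀ)ᵀ = Dp * Dᵀ := by simp [Matrix.transpose_mul]
    _ = Dp * D := by rw [hD]
    _ = (Dp * D)ᵀ := h4.symm
    _ = Dᵀ * Dpᵀ := by rw [Matrix.transpose_mul]
    _ = D * Dpᵀ := by rw [hD]
  · calc (Dpᵀ * D)ᵀ = Dᵀ * Dp := by simp [Matrix.transpose_mul]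
    _ = D * Dp := by rw [hD]
    _ = (D * Dp)ᵀ := h3.symm
    _ = Dpᵀ * Dᵀ := by rw [Matrix.transpose_mul]
    _ = Dpᵀ * D := by rw [hD]

end mp

theorem riccati_downdate_range_condition {n m k : ℕ}
    (A : Matrix (Fin n) (Fin n) ℝ) (B : Matrix (Fin n) (Fin m) ℝ)
    (P : Matrix (Fin n) (Fin n) ℝ)
    (Qx : Matrix (Fin n) (Fin n) ℝ) (Qxw : Matrix (Fin n) (Fin m) ℝ)
    (Qw : Matrix (Fin m) (Fin m) ℝ)
    (V : Matrix (Fin n) (Fin k) ℝ) (C Cp : Matrix (Fin k) (Fin k) ℝ)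
    (Gp : Matrix (Fin m) (Fin m) ℝ)
    (hQ : (Matrix.fromBlocks Qx Qxw Qxwᵀ Qw).PosSemidef)
    (hP : P.PosSemidef) (hC : C.PosSemidef)
    (hV : ∃ Y : Matrix (Fin k) (Fin n) ℝ, Vᵀ = C * Y)
    (hPt : (P - V * Cp * Vᵀ).PosSemidef)
    (hCp : IsMP C Cp)
    (hGp : IsMP (Qw + Bᵀ * P * B) Gp) :
    (C - Vᵀ * B * Gp * Bᵀ * V).PosSemidef ∧
    ∃ Y : Matrix (Fin k) (Fin n) ℝ,
      ((Aᵀ - (Qxw + Aᵀ * P * B) * Gp * Bᵀ) * V)ᵀ =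
        (C - Vᵀ * B * Gp * Bᵀ * V) * Y := by
  obtain ⟨Y₀, hY₀⟩ := hV
  -- symmetry facts
  have hCsym : Cᵀ = C := by
    have := hC.1
    rwa [Matrix.IsHermitian, conjTranspose_eq_transpose_of_trivial] at this
  have hPsym : Pᵀ = P := by
    have := hP.1
    rwa [Matrix.IsHermitian, conjTranspose_eq_transpose_of_trivial] at this
  have hQwsym : Qwᵀ = Qw := by
    have := hQ.1
    rw [Matrix.IsHermitian, conjTranspose_eq_transpose_of_trivial,
      Matrix.fromBlocks_transpose] at this
    exact (Matrix.fromBlocks_inj.mp this).2.2.2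
  have hGsym : (Qw + Bᵀ * P * B)ᵀ = Qw + Bᵀ * P * B := by
    simp [Matrix.transpose_add, Matrix.transpose_mul, Matrix.transpose_transpose,
      hPsym, hQwsym, Matrix.mul_assoc]
  have hGpsym : Gpᵀ = Gp := mp_transpose _ _ hGsym hGp
  -- the key quadratic form inequality
  have key : ∀ (x : Fin k → ℝ) (y : Fin n → ℝ) (z : Fin m → ℝ),
      0 ≤ x ⬝ᵥ (C *ᵥ x) + 2 * (x ⬝ᵥ (Vᵀ *ᵥ (A *ᵥ y + B *ᵥ z)))
        + (A *ᵥ y + B *ᵥ z) ⬝ᵥ (P *ᵥ (A *ᵥ y + B *ᵥ z))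
        + (y ⬝ᵥ (Qx *ᵥ y) + y ⬝ᵥ (Qxw *ᵥ z) + z ⬝ᵥ (Qxwᵀ *ᵥ y) + z ⬝ᵥ (Qw *ᵥ z)) := by
    intro x y z
    set u := A *ᵥ y + B *ᵥ z with hu
    set s := Y₀ *ᵥ u with hs
    have e0 : Vᵀ *ᵥ u = C *ᵥ s := by rw [hY₀, hs, mulVec_mulVec]
    have hsym : ∀ (a b : Fin k → ℝ), a ⬝ᵥ (C *ᵥ b) = b ⬝ᵥ (C *ᵥ a) := by
      intro a b; rw [dot_shift, hCsym, dotProduct_comm]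
    have h1 : 0 ≤ (x + s) ⬝ᵥ (C *ᵥ (x + s)) := by simpa using hC.dotProduct_mulVec_nonneg (x + s)
    have h2 : 0 ≤ u ⬝ᵥ (P *ᵥ u) - s ⬝ᵥ (C *ᵥ s) := by
      have hp : 0 ≤ u ⬝ᵥ ((P - V * Cp * Vᵀ) *ᵥ u) := by simpa using hPt.dotProduct_mulVec_nonneg u
      have e2 : u ⬝ᵥ ((V * Cp * Vᵀ) *ᵥ u) = s ⬝ᵥ (C *ᵥ s) := by
        have estep : (V * Cp * Vᵀ) *ᵥ u = V *ᵥ (Cp *ᵥ (Vᵀ *ᵥ u)) := by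
          simp only [mulVec_mulVec, Matrix.mul_assoc]
        rw [estep, e0, dot_shift V, mulVec_mulVec]
        -- (Vᵀ *ᵥ u) ⬝ᵥ ((Cp * C) *ᵥ s)
        rw [e0]
        -- (C *ᵥ s) ⬝ᵥ ((Cp * C) *ᵥ s)
        rw [dotProduct_comm, dot_shift, hCsym, mulVec_mulVec, ← Matrix.mul_assoc, hCp.1]
        exact dotProduct_comm _ _
      rw [sub_mulVec, dotProduct_sub] at hp
      rw [e2] at hp
      exact hp
    have h3 : 0 ≤ y ⬝ᵥ (Qx *ᵥ y) + y ⬝ᵥ (Qxw *ᵥ z) + z ⬝ᵥ (Qxwᵀ *ᵥ y) + z ⬝ᵥ (Qw *ᵥ z) := by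
      have h := hQ.dotProduct_mulVec_nonneg (Sum.elim y z)
      rw [show star (Sum.elim y z) = Sum.elim y z from star_trivial _] at h
      rw [Matrix.fromBlocks_mulVec, sumElim_dotProduct_sumElim,
        dotProduct_add, dotProduct_add] at h
      simp only [Sum.elim_comp_inl, Sum.elim_comp_inr] at h
      linarith
    have hexp : (x + s) ⬝ᵥ (C *ᵥ (x + s))
        = x ⬝ᵥ (C *ᵥ x) + 2 * (x ⬝ᵥ (C *ᵥ s)) + s ⬝ᵥ (C *ᵥ s) := by
      rw [mulVec_add, dotProduct_add, add_dotProduct, add_dotProduct, hsym s x]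
      ring
    rw [hexp] at h1
    rw [e0]
    linarith
  -- quadratic form of G
  have hGmul : ∀ v : Fin m → ℝ, v ⬝ᵥ ((Qw + Bᵀ * P * B) *ᵥ v)
      = v ⬝ᵥ (Qw *ᵥ v) + (B *ᵥ v) ⬝ᵥ (P *ᵥ (B *ᵥ v)) := by
    intro v
    rw [add_mulVec, dotProduct_add]
    congr 1
    rw [show (Bᵀ * P * B) *ᵥ v = Bᵀ *ᵥ (P *ᵥ (B *ᵥ v)) by
      simp only [mulVec_mulVec, Matrix.mul_assoc]]
    rw [dot_shift, Matrix.transpose_transpose]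
  -- kernel of G is in kernel of VᵀB
  have kerG : ∀ v : Fin m → ℝ, (Qw + Bᵀ * P * B) *ᵥ v = 0 → (Vᵀ * B) *ᵥ v = 0 := by
    intro v hv
    have h0 : v ⬝ᵥ (Qw *ᵥ v) + (B *ᵥ v) ⬝ᵥ (P *ᵥ (B *ᵥ v)) = 0 := by
      rw [← hGmul v, hv, dotProduct_zero]
    set w' := (Vᵀ * B) *ᵥ v with hw'
    have hc : ∀ t : ℝ, 0 ≤ t^2 * (w' ⬝ᵥ (C *ᵥ w')) + 2 * t * (w' ⬝ᵥ w') := by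
      intro t
      have h := key (t • w') 0 v
      simp only [mulVec_zero, zero_add, dotProduct_zero, zero_dotProduct, add_zero,
        smul_dotProduct, dotProduct_smul, mulVec_smul, smul_eq_mul] at h
      rw [show Vᵀ *ᵥ (B *ᵥ v) = w' by rw [hw']; exact mulVec_mulVec _ _ _] at h
      nlinarith [h, h0]
    exact dotProduct_self_eq_zero.mp (quad_coeff_zero hc)
  -- matrix identity VᵀB = VᵀB Gp G
  have hVBGpG : Vᵀ * B = Vᵀ * B * Gp * (Qw + Bᵀ * P * B) := by
    have h0 : Vᵀ * B * (1 - Gp * (Qw + Bᵀ * P * B)) = 0 := by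
      have hcol : ∀ v, (Vᵀ * B * (1 - Gp * (Qw + Bᵀ * P * B))) *ᵥ v = 0 := by
        intro v
        rw [← mulVec_mulVec]
        apply kerG
        rw [mulVec_mulVec]
        rw [show (Qw + Bᵀ * P * B) * (1 - Gp * (Qw + Bᵀ * P * B)) = 0 by
          rw [Matrix.mul_sub, Matrix.mul_one, ← Matrix.mul_assoc, hGp.1, sub_self]]
        rw [Matrix.zero_mulVec]
      ext i j
      have := congrFun (hcol (Pi.single j 1)) i
      simpa using this
    rw [Matrix.mul_sub, Matrix.mul_one] at h0
    have h1 := sub_eq_zero.mp h0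
    rw [Matrix.mul_assoc]
    exact h1
  -- vector identity G Gp BᵀV x = BᵀV x
  have hGGpw : ∀ x : Fin k → ℝ,
      (Qw + Bᵀ * P * B) *ᵥ (Gp *ᵥ ((Bᵀ * V) *ᵥ x)) = (Bᵀ * V) *ᵥ x := by
    intro x
    have hmat : (Qw + Bᵀ * P * B) * Gp * (Bᵀ * V) = Bᵀ * V := by
      have h := congrArg Matrix.transpose hVBGpG
      simp only [Matrix.transpose_mul, Matrix.transpose_transpose, hGsym, hGpsym] at h
      rw [Matrix.mul_assoc]
      exact h.symm
    rw [mulVec_mulVec, mulVec_mulVec, hmat]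
  -- transpose of the downdated C
  have hC'sym : (C - Vᵀ * B * Gp * Bᵀ * V)ᵀ = C - Vᵀ * B * Gp * Bᵀ * V := by
    simp [Matrix.transpose_sub, Matrix.transpose_mul, Matrix.transpose_transpose,
      hCsym, hGpsym, Matrix.mul_assoc]
  -- the master inequality
  have main2 : ∀ (x : Fin k → ℝ) (y' : Fin n → ℝ) (t : ℝ),
      0 ≤ x ⬝ᵥ ((C - Vᵀ * B * Gp * Bᵀ * V) *ᵥ x)
        + 2 * t * (y' ⬝ᵥ (((Aᵀ - (Qxw + Aᵀ * P * B) * Gp * Bᵀ) * V) *ᵥ x))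
        + t^2 * ((A *ᵥ y') ⬝ᵥ (P *ᵥ (A *ᵥ y')) + y' ⬝ᵥ (Qx *ᵥ y')) := by
    intro x y' t
    set w := (Bᵀ * V) *ᵥ x with hw
    set z := -(Gp *ᵥ w) with hz
    have i1 : x ⬝ᵥ (Vᵀ *ᵥ (B *ᵥ z)) = -(w ⬝ᵥ (Gp *ᵥ w)) := by
      rw [mulVec_mulVec, dot_shift, Matrix.transpose_mul, Matrix.transpose_transpose,
        ← hw, hz, dotProduct_neg]
    have i2 : (B *ᵥ z) ⬝ᵥ (P *ᵥ (B *ᵥ z)) + z ⬝ᵥ (Qw *ᵥ z) = w ⬝ᵥ (Gp *ᵥ w) := by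
      have hg := hGmul z
      have hz2 : (Qw + Bᵀ * P * B) *ᵥ z = -w := by
        rw [hz, mulVec_neg, hw]
        rw [hGGpw x]
      rw [hz2] at hg
      have hzw : z ⬝ᵥ (-w) = w ⬝ᵥ (Gp *ᵥ w) := by
        rw [hz, dotProduct_neg, neg_dotProduct, neg_neg, dotProduct_comm]
      linarith [hg, hzw]
    have i3 : x ⬝ᵥ ((C - Vᵀ * B * Gp * Bᵀ * V) *ᵥ x)
        = x ⬝ᵥ (C *ᵥ x) - w ⬝ᵥ (Gp *ᵥ w) := by
      rw [sub_mulVec, dotProduct_sub]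
      congr 1
      rw [show (Vᵀ * B * Gp * Bᵀ * V) *ᵥ x = (Vᵀ * B) *ᵥ (Gp *ᵥ ((Bᵀ * V) *ᵥ x)) by
        simp only [mulVec_mulVec, Matrix.mul_assoc]]
      rw [dot_shift, Matrix.transpose_mul, Matrix.transpose_transpose, ← hw]
    have i4 : (B *ᵥ z) ⬝ᵥ (P *ᵥ (A *ᵥ y')) = (A *ᵥ y') ⬝ᵥ (P *ᵥ (B *ᵥ z)) := by
      rw [dot_shift, hPsym, dotProduct_comm]
    have i5 : z ⬝ᵥ (Qxwᵀ *ᵥ y') = y' ⬝ᵥ (Qxw *ᵥ z) := by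
      rw [dot_shift, Matrix.transpose_transpose, dotProduct_comm]
    have i6 : x ⬝ᵥ (Vᵀ *ᵥ (A *ᵥ y')) + (A *ᵥ y') ⬝ᵥ (P *ᵥ (B *ᵥ z)) + y' ⬝ᵥ (Qxw *ᵥ z)
        = y' ⬝ᵥ (((Aᵀ - (Qxw + Aᵀ * P * B) * Gp * Bᵀ) * V) *ᵥ x) := by
      have ev : ((Aᵀ - (Qxw + Aᵀ * P * B) * Gp * Bᵀ) * V) *ᵥ x
          = Aᵀ *ᵥ (V *ᵥ x) + (Qxw + Aᵀ * P * B) *ᵥ z := by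
        rw [Matrix.sub_mul, sub_mulVec, hz, hw, mulVec_neg, sub_eq_add_neg]
        congr 1
        · rw [mulVec_mulVec]
        · rw [show ((Qxw + Aᵀ * P * B) * Gp * Bᵀ * V) *ᵥ x
              = (Qxw + Aᵀ * P * B) *ᵥ (Gp *ᵥ ((Bᵀ * V) *ᵥ x)) by
            simp only [mulVec_mulVec, Matrix.mul_assoc]]
      have e1 : y' ⬝ᵥ (Aᵀ *ᵥ (V *ᵥ x)) = x ⬝ᵥ (Vᵀ *ᵥ (A *ᵥ y')) := by
        rw [dot_shift, Matrix.transpose_transpose, dot_shift, dotProduct_comm]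
      have e2 : y' ⬝ᵥ ((Qxw + Aᵀ * P * B) *ᵥ z)
          = y' ⬝ᵥ (Qxw *ᵥ z) + (A *ᵥ y') ⬝ᵥ (P *ᵥ (B *ᵥ z)) := by
        rw [add_mulVec, dotProduct_add]
        congr 1
        rw [show (Aᵀ * P * B) *ᵥ z = Aᵀ *ᵥ (P *ᵥ (B *ᵥ z)) by
          simp only [mulVec_mulVec, Matrix.mul_assoc]]
        rw [dot_shift, Matrix.transpose_transpose]
      rw [ev, dotProduct_add, e1, e2]
      ring
    have h := key x (t • y') z
    have heq : x ⬝ᵥ (C *ᵥ x) + 2 * (x ⬝ᵥ (Vᵀ *ᵥ (A *ᵥ (t • y') + B *ᵥ z)))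
        + (A *ᵥ (t • y') + B *ᵥ z) ⬝ᵥ (P *ᵥ (A *ᵥ (t • y') + B *ᵥ z))
        + ((t • y') ⬝ᵥ (Qx *ᵥ (t • y')) + (t • y') ⬝ᵥ (Qxw *ᵥ z)
          + z ⬝ᵥ (Qxwᵀ *ᵥ (t • y')) + z ⬝ᵥ (Qw *ᵥ z))
        = x ⬝ᵥ ((C - Vᵀ * B * Gp * Bᵀ * V) *ᵥ x)
          + 2 * t * (y' ⬝ᵥ (((Aᵀ - (Qxw + Aᵀ * P * B) * Gp * Bᵀ) * V) *ᵥ x))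
          + t^2 * ((A *ᵥ y') ⬝ᵥ (P *ᵥ (A *ᵥ y')) + y' ⬝ᵥ (Qx *ᵥ y')) := by
      simp only [mulVec_smul, mulVec_add, smul_add, dotProduct_add, add_dotProduct,
        dotProduct_smul, smul_dotProduct, smul_eq_mul]
      linear_combination 2*i1 + i2 - i3 + t*i4 + t*i5 + 2*t*i6
    rw [heq] at h
    exact h
  -- positive semidefiniteness
  have hpsd : (C - Vᵀ * B * Gp * Bᵀ * V).PosSemidef := by
    refine Matrix.PosSemidef.of_dotProduct_mulVec_nonneg ?_ ?_
    · rw [Matrix.IsHermitian, conjTranspose_eq_transpose_of_trivial]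
      exact hC'sym
    · intro x
      have := main2 x 0 0
      simpa using this
  refine ⟨hpsd, ?_⟩
  -- kernel condition
  have kerC' : ∀ x : Fin k → ℝ, (C - Vᵀ * B * Gp * Bᵀ * V) *ᵥ x = 0 →
      ((Aᵀ - (Qxw + Aᵀ * P * B) * Gp * Bᵀ) * V) *ᵥ x = 0 := by
    intro x hx
    set v' := ((Aᵀ - (Qxw + Aᵀ * P * B) * Gp * Bᵀ) * V) *ᵥ x with hv'
    have hc : ∀ t : ℝ, 0 ≤ t^2 * ((A *ᵥ v') ⬝ᵥ (P *ᵥ (A *ᵥ v')) + v' ⬝ᵥ (Qx *ᵥ v'))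
        + 2 * t * (v' ⬝ᵥ v') := by
      intro t
      have h := main2 x v' t
      rw [← hv', hx, dotProduct_zero, zero_add] at h
      linarith
    exact dotProduct_self_eq_zero.mp (quad_coeff_zero hc)
  obtain ⟨X, hX⟩ := factor_right (C - Vᵀ * B * Gp * Bᵀ * V)
    ((Aᵀ - (Qxw + Aᵀ * P * B) * Gp * Bᵀ) * V) kerC'
  refine ⟨Xᵀ, ?_⟩
  rw [hX, Matrix.transpose_mul, hC'sym]
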